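/- Let y ∈ ℂ^m be drawn from a permutation-invariant distribution with exactly r ≥ c nonzero values, and let A be the 2c × m matrix of the first 2c rows of the m×m inverse Fourier matrix. Then the probability that there exists a vector y' with at most one nonzero entry and A(y − y') = 0 is at most c·(c/(m−r))^{c−2}. -/

import Mathlib

open MeasureTheory

open Finset
open scoped Classical

lemma omega_pow_inj (m : ℕ) (hm : 0 < m) :
    Function.Injective (fun j : Fin m => Complex.exp (2 * Real.pi * Complex.I / m) ^ (j : ℕ)) := by
  intro a b hab
  simp only at hab
  rw [← Complex.exp_nat_mul, ← Complex.exp_nat_mul, Complex.exp_eq_exp_iff_exists_int] at hab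
  obtain ⟨z, hz⟩ := hab
  have hm' : (m : ℂ) ≠ 0 := Nat.cast_ne_zero.mpr hm.ne'
  have h2pi : (2 * Real.pi * Complex.I : ℂ) ≠ 0 := by
    simp [Complex.ext_iff, Real.pi_ne_zero]
  have : (((a : ℤ) - b - z * m : ℤ) : ℂ) * (2 * Real.pi * Complex.I) = 0 := by
    push_cast
    field_simp at hz
    linear_combination (2 * (Real.pi : ℂ) * Complex.I) * hz
  have hz' : (a : ℤ) - b - z * m = 0 := by
    rcases mul_eq_zero.mp this with h | h
    · exact_mod_cast h
    · exact absurd h h2pi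
  have hdvd : (m : ℤ) ∣ ((a : ℤ) - b) := ⟨z, by linarith⟩
  have ha := a.2
  have hb := b.2
  have habs : |(a : ℤ) - (b : ℤ)| < m := by
    rw [abs_lt]; omega
  have := Int.eq_zero_of_abs_lt_dvd hdvd habs
  ext
  omega

lemma ker_lemma (m c : ℕ) (hm : 0 < m)
    (A : Matrix (Fin (2 * c)) (Fin m) ℂ)
    (hA : ∀ τ j, A τ j = Complex.exp (2 * Real.pi * Complex.I / m) ^ ((τ : ℕ) * (j : ℕ)))
    (v : Fin m → ℂ) (hv0 : A.mulVec v = 0) (hsp : {j | v j ≠ 0}.ncard ≤ 2 * c) : v = 0 := by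
  classical
  set ω := Complex.exp (2 * Real.pi * Complex.I / m) with hω
  set J : Finset (Fin m) := Finset.univ.filter (fun j => v j ≠ 0) with hJdef
  have hJset : {j | v j ≠ 0} = (J : Set (Fin m)) := by
    ext j; simp [hJdef]
  have hJcard : J.card ≤ 2 * c := by
    rw [hJset, Set.ncard_coe_finset] at hsp; exact hsp
  set s := J.card with hs
  set iso := J.orderIsoOfFin rfl with hiso
  set e : Fin s → Fin m := fun i => (iso i : Fin m) with he
  have he_inj : Function.Injective e := fun a b hab => by
    apply iso.injective; exact Subtype.ext hab
  have he_mem : ∀ i, e i ∈ J := fun i => (iso i).2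
  have hf_inj : Function.Injective (fun i : Fin s => ω ^ ((e i : ℕ))) := by
    intro a b hab
    exact he_inj (omega_pow_inj m hm hab)
  have key : (fun i : Fin s => v (e i)) = 0 := by
    apply Matrix.eq_zero_of_forall_pow_sum_mul_pow_eq_zero hf_inj
    intro i
    have hτlt : (i : ℕ) < 2 * c := lt_of_lt_of_le i.2 hJcard
    set τ : Fin (2 * c) := ⟨i, hτlt⟩ with hτ
    have h0 : ∑ j, A τ j * v j = 0 := congrFun hv0 τ
    have h1 : ∑ j ∈ J, A τ j * v j = 0 := by
      rw [← h0]
      apply Finset.sum_subset (Finset.subset_univ J)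
      intro x _ hx
      have : v x = 0 := by
        by_contra hvx
        exact hx (Finset.mem_filter.mpr ⟨Finset.mem_univ x, hvx⟩)
      simp [this]
    calc ∑ j : Fin s, v (e j) * (ω ^ ((e j : ℕ))) ^ (i : ℕ)
        = ∑ j ∈ J, v j * ω ^ ((τ : ℕ) * (j : ℕ)) := by
          rw [← Finset.sum_coe_sort J]
          apply Fintype.sum_equiv iso.toEquiv
          intro x
          show v (e x) * (ω ^ ((e x : ℕ))) ^ (i : ℕ) = v (e x) * ω ^ ((τ : ℕ) * ((e x : ℕ)))
          congr 1
          rw [← pow_mul, mul_comm ((e x : ℕ))]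
      _ = 0 := by
          rw [← h1]
          apply Finset.sum_congr rfl
          intro j _
          rw [hA τ j, mul_comm]
  funext j
  by_cases hj : j ∈ J
  · have : v (e (iso.symm ⟨j, hj⟩)) = 0 := congrFun key _
    simpa [he] using this
  · have : v j = 0 := by
      by_contra hvj
      exact hj (Finset.mem_filter.mpr ⟨Finset.mem_univ j, hvj⟩)
    simp [this]

lemma hA_omega (m c : ℕ) (hm : 0 < m) (A : Matrix (Fin (2 * c)) (Fin m) ℂ)
    (hA : ∀ (τ : Fin (2 * c)) (j : Fin m),
      A τ j = Complex.exp (-(2 * Real.pi * Complex.I) / m) ^ (-(((τ : ℕ) * (j : ℕ) : ℕ) : ℤ))) :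
    ∀ τ j, A τ j = Complex.exp (2 * Real.pi * Complex.I / m) ^ ((τ : ℕ) * (j : ℕ)) := by
  intro τ j
  rw [hA τ j]
  rw [zpow_neg, zpow_natCast, ← inv_pow]
  congr 1
  rw [← Complex.exp_neg, neg_div, neg_neg]


def Phi {m : ℕ} (S0 : Finset (Fin m)) (σ : Equiv.Perm (Fin m)) : Fin m → Option (Fin m) :=
  fun x => if x ∈ S0 then some (σ.symm x) else none

lemma sparse_single (m : ℕ) (hm : 0 < m) (y' : Fin m → ℂ) (h : {j | y' j ≠ 0}.ncard ≤ 1) :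
    ∃ (j0 : Fin m) (t : ℂ), y' = Pi.single j0 t := by
  classical
  by_cases he : ∀ j, y' j = 0
  · exact ⟨⟨0, hm⟩, 0, by funext j; simp [he j]⟩
  · push_neg at he
    obtain ⟨j0, hj0⟩ := he
    refine ⟨j0, y' j0, ?_⟩
    funext j
    by_cases hj : j = j0
    · subst hj; simp
    · rw [Pi.single_eq_of_ne hj]
      by_contra hjne
      have hsub : {j0, j} ⊆ {j | y' j ≠ 0} := by
        intro x hx
        rcases hx with h | h
        · subst h; exact hj0
        · simp_all
      have h2 : ({j0, j} : Set (Fin m)).ncard = 2 := by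
        rw [Set.ncard_pair (Ne.symm hj)]
      have := Set.ncard_le_ncard hsub (Set.toFinite _)
      omega


lemma BC (m : ℕ) (S0 S1 : Finset (Fin m)) (hdisj : Disjoint S0 S1)
    (φ : Fin m → Option (Fin m)) (T : Finset (Fin m)) :
    (Finset.univ.filter (fun σ : Equiv.Perm (Fin m) =>
        (∀ x ∈ S0, φ x = some (σ.symm x)) ∧ S1.image σ.symm = T)).card
      ≤ S1.card.factorial * (m - S0.card - S1.card).factorial := by
  classical
  set F := Finset.univ.filter (fun σ : Equiv.Perm (Fin m) =>
        (∀ x ∈ S0, φ x = some (σ.symm x)) ∧ S1.image σ.symm = T) with hF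
  rcases F.eq_empty_or_nonempty with hFe | ⟨σ1, hσ1⟩
  · simp [hFe]
  obtain ⟨h1a, h1b⟩ := Finset.mem_filter.mp hσ1 |>.2
  have hT : T.card = S1.card := by
    rw [← h1b, Finset.card_image_of_injective _ σ1.symm.injective]
  set K := (Finset.univ : Finset (Fin m)) \ (S0 ∪ S1) with hKdef
  set X := (Finset.univ : Finset (Fin m)) \ ((S0 ∪ S1).image σ1.symm) with hXdef
  have hcu : (S0 ∪ S1).card = S0.card + S1.card := Finset.card_union_of_disjoint hdisj
  have hK : K.card = m - S0.card - S1.card := by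
    rw [hKdef, Finset.card_sdiff_of_subset (Finset.subset_univ _), Finset.card_univ, Fintype.card_fin, hcu]
    omega
  have hX : X.card = m - S0.card - S1.card := by
    rw [hXdef, Finset.card_sdiff_of_subset (Finset.subset_univ _), Finset.card_univ, Fintype.card_fin,
      Finset.card_image_of_injective _ σ1.symm.injective, hcu]
    omega
  -- key: for σ ∈ F, images agree
  have himg : ∀ σ ∈ F, (S0 ∪ S1).image σ.symm = (S0 ∪ S1).image σ1.symm := by
    intro σ hσ
    obtain ⟨ha, hb⟩ := Finset.mem_filter.mp hσ |>.2
    rw [Finset.image_union, Finset.image_union]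
    congr 1
    · apply Finset.image_congr
      intro x hx
      have := (ha x hx).symm.trans (h1a x hx)
      exact Option.some_injective _ this
    · rw [hb, h1b]
  have hmem1 : ∀ σ ∈ F, ∀ s ∈ S1, σ.symm s ∈ T := by
    intro σ hσ s hs
    obtain ⟨_, hb⟩ := Finset.mem_filter.mp hσ |>.2
    rw [← hb]
    exact Finset.mem_image_of_mem _ hs
  have hmem2 : ∀ σ ∈ F, ∀ x ∈ K, σ.symm x ∈ X := by
    intro σ hσ x hx
    rw [hXdef, Finset.mem_sdiff]
    refine ⟨Finset.mem_univ _, ?_⟩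
    rw [← himg σ hσ]
    intro hmem
    obtain ⟨w, hw, hww⟩ := Finset.mem_image.mp hmem
    have : w = x := σ.symm.injective hww
    subst this
    exact (Finset.mem_sdiff.mp hx).2 hw
  let f : {σ // σ ∈ F} → ((↥S1 ↪ ↥T) × (↥K ↪ ↥X)) := fun σ =>
    (⟨fun s => ⟨σ.1.symm s, hmem1 σ.1 σ.2 s s.2⟩,
        fun a b h => Subtype.ext (σ.1.symm.injective (congrArg Subtype.val h))⟩,
     ⟨fun x => ⟨σ.1.symm x, hmem2 σ.1 σ.2 x x.2⟩,
        fun a b h => Subtype.ext (σ.1.symm.injective (congrArg Subtype.val h))⟩)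
  have hfinj : Function.Injective f := by
    intro a b hab
    have hab1 : (f a).1 = (f b).1 := congrArg Prod.fst hab
    have hab2 : (f a).2 = (f b).2 := congrArg Prod.snd hab
    have haS0 := (Finset.mem_filter.mp a.2).2.1
    have hbS0 := (Finset.mem_filter.mp b.2).2.1
    have hsymm : ∀ x, a.1.symm x = b.1.symm x := by
      intro x
      by_cases h0 : x ∈ S0
      · exact Option.some_injective _ ((haS0 x h0).symm.trans (hbS0 x h0))
      by_cases h1 : x ∈ S1
      · have := DFunLike.congr_fun hab1 (⟨x, h1⟩ : ↥S1)
        exact congrArg Subtype.val this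
      · have hK : x ∈ K := by
          rw [hKdef, Finset.mem_sdiff]
          exact ⟨Finset.mem_univ _, by simp [h0, h1]⟩
        have := DFunLike.congr_fun hab2 (⟨x, hK⟩ : ↥K)
        exact congrArg Subtype.val this
    have hsy : a.1.symm = b.1.symm := Equiv.ext hsymm
    have : a.1 = b.1 := by
      rw [← Equiv.symm_symm a.1, hsy, Equiv.symm_symm]
    exact Subtype.ext this
  calc F.card = Fintype.card {σ // σ ∈ F} := (Fintype.card_coe F).symm
    _ ≤ Fintype.card ((↥S1 ↪ ↥T) × (↥K ↪ ↥X)) := Fintype.card_le_of_injective f hfinj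
    _ = S1.card.factorial * (m - S0.card - S1.card).factorial := by
        rw [Fintype.card_prod, Fintype.card_embedding_eq, Fintype.card_embedding_eq,
          Fintype.card_coe, Fintype.card_coe, Fintype.card_coe, Fintype.card_coe,
          hT, hK, hX, Nat.descFactorial_self, Nat.descFactorial_self]

lemma Phi_eq {m : ℕ} (S0 : Finset (Fin m)) (σ τ : Equiv.Perm (Fin m)) :
    Phi S0 σ = Phi S0 τ ↔ ∀ x ∈ S0, σ.symm x = τ.symm x := by
  constructor
  · intro h x hx
    have := congrFun h x
    simp only [Phi, if_pos hx] at this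
    exact Option.some_injective _ this
  · intro h
    funext x
    by_cases hx : x ∈ S0 <;> simp [Phi, hx]
    exact h x hx

lemma fiber_lb {m : ℕ} (S0 : Finset (Fin m)) (σ0 : Equiv.Perm (Fin m)) :
    (m - S0.card).factorial ≤
      (Finset.univ.filter (fun σ : Equiv.Perm (Fin m) => Phi S0 σ = Phi S0 σ0)).card := by
  classical
  set D := S0.image σ0.symm with hD
  have hDcard : D.card = S0.card := Finset.card_image_of_injective _ σ0.symm.injective
  set F := Finset.univ.filter (fun σ : Equiv.Perm (Fin m) => Phi S0 σ = Phi S0 σ0) with hF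
  have hfix : ∀ (π : Equiv.Perm {x : Fin m // ¬ x ∈ D}) (x : Fin m), x ∈ D →
      (π.extendDomain (Equiv.refl _)) x = x := by
    intro π x hx
    exact Equiv.Perm.extendDomain_apply_not_subtype _ _ (by simpa using hx)
  have hfix' : ∀ (π : Equiv.Perm {x : Fin m // ¬ x ∈ D}) (x : Fin m), x ∈ D →
      (π.extendDomain (Equiv.refl _)).symm x = x := by
    intro π x hx
    apply (π.extendDomain (Equiv.refl _)).injective
    rw [Equiv.apply_symm_apply, hfix π x hx]
  let g : Equiv.Perm {x : Fin m // ¬ x ∈ D} → Equiv.Perm (Fin m) :=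
    fun π => (π.extendDomain (Equiv.refl _)).trans σ0
  have hgmem : ∀ π, g π ∈ F := by
    intro π
    rw [hF, Finset.mem_filter]
    refine ⟨Finset.mem_univ _, ?_⟩
    rw [Phi_eq]
    intro x hx
    rw [Equiv.symm_trans_apply]
    rw [hfix' π _ (Finset.mem_image_of_mem σ0.symm hx)]
  have hginj : Function.Injective g := by
    intro π π' h
    have h2 : π.extendDomain (Equiv.refl _) = π'.extendDomain (Equiv.refl _) := by
      have := congrArg (fun e => e.trans σ0.symm) h
      simpa [g, Equiv.trans_assoc] using this
    apply Equiv.ext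
    intro a
    have h3 : (π.extendDomain (Equiv.refl _)) ↑a = (π'.extendDomain (Equiv.refl _)) ↑a := by
      rw [h2]
    rw [Equiv.Perm.extendDomain_apply_subtype (p := fun x : Fin m => ¬ x ∈ D) π (Equiv.refl _) a.2,
        Equiv.Perm.extendDomain_apply_subtype (p := fun x : Fin m => ¬ x ∈ D) π' (Equiv.refl _) a.2] at h3
    exact Subtype.ext (by simpa using h3)
  let g' : Equiv.Perm {x : Fin m // ¬ x ∈ D} → ↥F := fun π => ⟨g π, hgmem π⟩
  have hg'inj : Function.Injective g' := fun a b h => hginj (congrArg Subtype.val h)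
  have hcard : Fintype.card (Equiv.Perm {x : Fin m // ¬ x ∈ D}) = (m - S0.card).factorial := by
    rw [Fintype.card_perm, Fintype.card_subtype_compl]
    congr 1
    rw [Fintype.card_fin, Fintype.card_coe, hDcard]
  calc (m - S0.card).factorial
      = Fintype.card (Equiv.Perm {x : Fin m // ¬ x ∈ D}) := hcard.symm
    _ ≤ Fintype.card ↥F := Fintype.card_le_of_injective g' hg'inj
    _ = F.card := Fintype.card_coe F

section perphi

variable {m c r : ℕ} (hm : 0 < m) (hc : 2 ≤ c) (hcr : c ≤ r) (hrm : r < m)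
  (A : Matrix (Fin (2 * c)) (Fin m) ℂ)
  (y : Fin m → ℂ)

-- per-fiber bound
lemma per_phi
    (hm : 0 < m) (hc : 2 ≤ c) (hcr : c ≤ r) (hrm : r < m) (hn2 : 2 ≤ m - r)
    (hker : ∀ v : Fin m → ℂ, A.mulVec v = 0 → {j | v j ≠ 0}.ncard ≤ 2 * c → v = 0)
    (S0 S1 : Finset (Fin m)) (hdisj : Disjoint S0 S1)
    (hS1 : ∀ s ∈ S1, y s ≠ 0) (hS1card : S1.card = c - 1)
    (hS0card : S0.card = r - (c - 1))
    (hSuny : ∀ j, y j ≠ 0 → j ∈ S0 ∪ S1)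
    (σ0 : Equiv.Perm (Fin m)) :
    ((Finset.univ.filter (fun σ : Equiv.Perm (Fin m) =>
        (∃ y' : Fin m → ℂ, {j | y' j ≠ 0}.ncard ≤ 1 ∧ A.mulVec ((fun j => y (σ j)) - y') = 0)
        ∧ Phi S0 σ = Phi S0 σ0)).card)
      ≤ (2 * (m - r + (c - 1))) * ((c - 1).factorial * (m - r).factorial) := by
  classical
  set k := c - 1 with hk
  set n := m - r with hn
  -- the fixed part u0
  set u0 : Fin m → ℂ := fun j => if σ0 j ∈ S0 then y (σ0 j) else 0 with hu0
  set z : Equiv.Perm (Fin m) → Fin m → ℂ :=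
    fun σ j => if σ j ∈ S1 then y (σ j) else 0 with hz
  -- decomposition
  have key1 : ∀ σ : Equiv.Perm (Fin m), Phi S0 σ = Phi S0 σ0 →
      (fun j => y (σ j)) = u0 + z σ := by
    intro σ hφ
    have hag : ∀ x ∈ S0, σ.symm x = σ0.symm x := by
      intro x hx
      have := congrFun hφ x
      simp only [Phi, if_pos hx] at this
      exact Option.some_injective _ this
    have hval : ∀ j, σ j ∈ S0 → σ0 j = σ j := by
      intro j h
      have h2 := hag (σ j) h
      rw [Equiv.symm_apply_apply] at h2
      have h3 := congrArg σ0 h2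
      rwa [Equiv.apply_symm_apply] at h3
    have hval0 : ∀ j, σ0 j ∈ S0 → σ j = σ0 j := by
      intro j h
      have h2 := hag (σ0 j) h
      rw [Equiv.symm_apply_apply] at h2
      have h3 := congrArg σ h2
      rw [Equiv.apply_symm_apply] at h3
      exact h3.symm
    have hsame : ∀ j, σ j ∈ S0 ↔ σ0 j ∈ S0 := by
      intro j
      constructor
      · intro h
        have := hval j h
        rwa [this]
      · intro h
        have := hval0 j h
        rwa [this]
    funext j
    simp only [Pi.add_apply]
    by_cases h0 : σ j ∈ S0
    · have hval' := hval j h0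
      have h1 : σ j ∉ S1 := Finset.disjoint_left.mp hdisj h0
      simp only [hz, hu0]
      rw [if_pos ((hsame j).mp h0), if_neg h1, hval', add_zero]
    · have h0' : σ0 j ∉ S0 := fun h => h0 ((hsame j).mpr h)
      by_cases h1 : σ j ∈ S1
      · simp only [hz, hu0]
        rw [if_neg h0', if_pos h1, zero_add]
      · have hy0 : y (σ j) = 0 := by
          by_contra hne
          rcases Finset.mem_union.mp (hSuny _ hne) with h | h
          · exact h0 h
          · exact h1 h
        simp only [hz, hu0]
        rw [if_neg h0', if_neg h1, hy0, add_zero]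
  -- the canonical sparse solution
  have hWsp : ∃ W : Fin m → ℂ, (∀ w : Fin m → ℂ,
        A.mulVec w = - A.mulVec u0 → {j | w j ≠ 0}.ncard ≤ c → w = W) ∧
      {j | W j ≠ 0}.ncard ≤ c := by
    by_cases hex : ∃ w : Fin m → ℂ, A.mulVec w = - A.mulVec u0 ∧ {j | w j ≠ 0}.ncard ≤ c
    · obtain ⟨W, hW1, hW2⟩ := hex
      refine ⟨W, ?_, hW2⟩
      intro w hw1 hw2
      have hd : A.mulVec (w - W) = 0 := by
        rw [Matrix.mulVec_sub, hw1, hW1, sub_self]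
      have hdsp : {j | (w - W) j ≠ 0}.ncard ≤ 2 * c := by
        have hsub : {j | (w - W) j ≠ 0} ⊆ {j | w j ≠ 0} ∪ {j | W j ≠ 0} := by
          intro j hj
          by_contra hn
          simp only [Set.mem_union, Set.mem_setOf_eq] at hn
          push_neg at hn
          simp only [Set.mem_setOf_eq, Pi.sub_apply] at hj
          rw [hn.1, hn.2, sub_zero] at hj
          exact hj rfl
        calc {j | (w - W) j ≠ 0}.ncard ≤ ({j | w j ≠ 0} ∪ {j | W j ≠ 0}).ncard :=
              Set.ncard_le_ncard hsub (Set.toFinite _)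
          _ ≤ {j | w j ≠ 0}.ncard + {j | W j ≠ 0}.ncard := Set.ncard_union_le _ _
          _ ≤ 2 * c := by omega
      have := hker _ hd hdsp
      rwa [sub_eq_zero] at this
    · refine ⟨0, ?_, by simp⟩
      intro w hw1 hw2
      exact absurd ⟨w, hw1, hw2⟩ hex
  obtain ⟨W, hWuniq, hWle⟩ := hWsp
  set Ws : Finset (Fin m) := Finset.univ.filter (fun j => W j ≠ 0) with hWs
  have hWscard : Ws.card ≤ c := by
    have : {j | W j ≠ 0} = (Ws : Set (Fin m)) := by ext j; simp [hWs]
    rw [this, Set.ncard_coe_finset] at hWle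
    exact hWle
  set R : Finset (Fin m) := Finset.univ \ (S0.image σ0.symm) with hR
  have hRcard : R.card = m - (r - k) := by
    rw [hR, Finset.card_sdiff_of_subset (Finset.subset_univ _), Finset.card_univ, Fintype.card_fin,
      Finset.card_image_of_injective _ σ0.symm.injective, hS0card]
  set 𝒯 : Finset (Finset (Fin m)) :=
    insert Ws (Ws.image fun j => Ws.erase j) ∪ (R.image fun j => insert j (Ws.erase j)) with h𝒯
  have h𝒯card : 𝒯.card ≤ 2 * (n + k) := by
    calc 𝒯.card ≤ (insert Ws (Ws.image fun j => Ws.erase j)).card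
          + (R.image fun j => insert j (Ws.erase j)).card := Finset.card_union_le _ _
      _ ≤ (1 + Ws.card) + R.card := by
          gcongr
          · exact (Finset.card_insert_le _ _).trans (by
              have := Finset.card_image_le (s := Ws) (f := fun j => Ws.erase j)
              omega)
          · exact Finset.card_image_le
      _ ≤ (1 + c) + (m - (r - k)) := by
          rw [hRcard]; omega
      _ ≤ 2 * (n + k) := by omega
  -- membership of supports
  have key2 : ∀ σ : Equiv.Perm (Fin m),
      (∃ y' : Fin m → ℂ, {j | y' j ≠ 0}.ncard ≤ 1 ∧ A.mulVec ((fun j => y (σ j)) - y') = 0) →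
      Phi S0 σ = Phi S0 σ0 → (S1.image σ.symm) ∈ 𝒯 := by
    intro σ hbad hφ
    obtain ⟨y', hy'sp, hy'0⟩ := hbad
    obtain ⟨j0, t, hy'⟩ := sparse_single m hm y' hy'sp
    subst hy'
    have hdec := key1 σ hφ
    set w' : Fin m → ℂ := z σ - Pi.single j0 t with hw'
    have hw'A : A.mulVec w' = - A.mulVec u0 := by
      have h1 : A.mulVec (u0 + w') = 0 := by
        have harg : u0 + w' = (fun j => y (σ j)) - Pi.single j0 t := by
          funext j
          have hd := congrFun hdec j
          simp only [Pi.add_apply] at hd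
          simp only [Pi.add_apply, Pi.sub_apply, hw']
          rw [hd]
          ring
        rw [harg, hy'0]
      rw [Matrix.mulVec_add] at h1
      exact eq_neg_of_add_eq_zero_right h1
    have hTmem : ∀ j, j ∈ S1.image σ.symm ↔ σ j ∈ S1 := by
      intro j
      constructor
      · rintro hj
        obtain ⟨s, hs, rfl⟩ := Finset.mem_image.mp hj
        rwa [Equiv.apply_symm_apply]
      · intro hj
        exact Finset.mem_image.mpr ⟨σ j, hj, Equiv.symm_apply_apply σ j⟩
    have hw'sp : {j | w' j ≠ 0}.ncard ≤ c := by
      have hsub : {j | w' j ≠ 0} ⊆ ((insert j0 (S1.image σ.symm) : Finset (Fin m)) : Set (Fin m)) := by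
        intro j hj
        simp only [Set.mem_setOf_eq, hw', Pi.sub_apply] at hj
        by_cases hjj : j = j0
        · simp [hjj]
        · rw [Pi.single_eq_of_ne hjj, sub_zero] at hj
          have : σ j ∈ S1 := by
            by_contra hns
            simp only [hz, if_neg hns] at hj
            exact hj rfl
          simp only [Finset.coe_insert, Set.mem_insert_iff]
          exact Or.inr (by rw [Finset.mem_coe, hTmem]; exact this)
      calc {j | w' j ≠ 0}.ncard
          ≤ ((insert j0 (S1.image σ.symm) : Finset (Fin m)) : Set (Fin m)).ncard :=
            Set.ncard_le_ncard hsub (Set.toFinite _)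
        _ = (insert j0 (S1.image σ.symm)).card := Set.ncard_coe_finset _
        _ ≤ (S1.image σ.symm).card + 1 := Finset.card_insert_le _ _
        _ ≤ c := by
            have := Finset.card_image_le (s := S1) (f := σ.symm)
            omega
    have hw'W : w' = W := hWuniq w' hw'A hw'sp
    have hzW : z σ = W + Pi.single j0 t := by
      rw [← hw'W, hw']; ring
    -- identify the support
    have hzsupp : ∀ j, z σ j ≠ 0 ↔ j ∈ S1.image σ.symm := by
      intro j
      rw [hTmem]
      constructor
      · intro hj
        by_contra hns
        simp only [hz, if_neg hns] at hj
        exact hj rfl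
      · intro hj
        simp only [hz, if_pos hj]
        exact hS1 _ hj
    by_cases h0 : W j0 + t = 0
    · have hTeq : S1.image σ.symm = Ws.erase j0 := by
        ext j
        rw [← hzsupp j]
        have := congrFun hzW j
        by_cases hjj : j = j0
        · subst hjj
          simp only [Pi.add_apply, Pi.single_eq_same] at this
          rw [this, h0]
          simp
        · simp only [Pi.add_apply, Pi.single_eq_of_ne hjj, add_zero] at this
          rw [this]
          simp [Finset.mem_erase, hjj, hWs]
      rw [hTeq]
      apply Finset.mem_union_left
      by_cases hj0 : j0 ∈ Ws
      · exact Finset.mem_insert_of_mem (Finset.mem_image_of_mem _ hj0)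
      · rw [Finset.erase_eq_of_notMem hj0]
        exact Finset.mem_insert_self _ _
    · have hj0T : j0 ∈ S1.image σ.symm := by
        rw [← hzsupp j0]
        have := congrFun hzW j0
        simp only [Pi.add_apply, Pi.single_eq_same] at this
        rw [this]
        exact h0
      have hTeq : S1.image σ.symm = insert j0 (Ws.erase j0) := by
        ext j
        rw [← hzsupp j]
        have := congrFun hzW j
        by_cases hjj : j = j0
        · subst hjj
          simp only [Pi.add_apply, Pi.single_eq_same] at this
          rw [this]
          simp [h0]
        · simp only [Pi.add_apply, Pi.single_eq_of_ne hjj, add_zero] at this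
          rw [this]
          simp [Finset.mem_insert, Finset.mem_erase, hjj, hWs]
      have hj0R : j0 ∈ R := by
        rw [hR, Finset.mem_sdiff]
        refine ⟨Finset.mem_univ _, ?_⟩
        intro hmem
        obtain ⟨x, hx, hxx⟩ := Finset.mem_image.mp hmem
        obtain ⟨s, hs, hss⟩ := Finset.mem_image.mp hj0T
        have hag : σ.symm x = σ0.symm x := by
          have := congrFun hφ x
          simp only [Phi, if_pos hx] at this
          exact Option.some_injective _ this
        have : x = s := σ.symm.injective (by rw [hag, hxx, hss])
        subst this
        exact Finset.disjoint_left.mp hdisj hx hs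
      rw [hTeq]
      apply Finset.mem_union_right
      exact Finset.mem_image_of_mem _ hj0R
  -- assemble
  have hsub : (Finset.univ.filter (fun σ : Equiv.Perm (Fin m) =>
        (∃ y' : Fin m → ℂ, {j | y' j ≠ 0}.ncard ≤ 1 ∧ A.mulVec ((fun j => y (σ j)) - y') = 0)
        ∧ Phi S0 σ = Phi S0 σ0)) ⊆
      𝒯.biUnion (fun T => Finset.univ.filter (fun σ : Equiv.Perm (Fin m) =>
        (∀ x ∈ S0, (Phi S0 σ0) x = some (σ.symm x)) ∧ S1.image σ.symm = T)) := by
    intro σ hσ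
    obtain ⟨-, hbad, hφ⟩ := Finset.mem_filter.mp hσ
    apply Finset.mem_biUnion.mpr
    refine ⟨S1.image σ.symm, key2 σ hbad hφ, Finset.mem_filter.mpr
      ⟨Finset.mem_univ _, fun x hx => ?_, rfl⟩⟩
    rw [← hφ]
    simp [Phi, if_pos hx]
  have hmsub : m - S0.card - S1.card = n := by
    rw [hS0card, hS1card]; omega
  calc (Finset.univ.filter (fun σ : Equiv.Perm (Fin m) =>
        (∃ y' : Fin m → ℂ, {j | y' j ≠ 0}.ncard ≤ 1 ∧ A.mulVec ((fun j => y (σ j)) - y') = 0)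
        ∧ Phi S0 σ = Phi S0 σ0)).card
      ≤ (𝒯.biUnion (fun T => Finset.univ.filter (fun σ : Equiv.Perm (Fin m) =>
          (∀ x ∈ S0, (Phi S0 σ0) x = some (σ.symm x)) ∧ S1.image σ.symm = T))).card :=
        Finset.card_le_card hsub
    _ ≤ ∑ T ∈ 𝒯, (Finset.univ.filter (fun σ : Equiv.Perm (Fin m) =>
          (∀ x ∈ S0, (Phi S0 σ0) x = some (σ.symm x)) ∧ S1.image σ.symm = T)).card :=
        Finset.card_biUnion_le
    _ ≤ ∑ _T ∈ 𝒯, S1.card.factorial * (m - S0.card - S1.card).factorial := by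
        apply Finset.sum_le_sum
        intro T _
        exact BC m S0 S1 hdisj (Phi S0 σ0) T
    _ = 𝒯.card * (S1.card.factorial * (m - S0.card - S1.card).factorial) := by
        rw [Finset.sum_const, smul_eq_mul]
    _ ≤ (2 * (n + k)) * ((c - 1).factorial * (m - r).factorial) := by
        rw [hmsub, hS1card, ← hk, ← hn]
        exact Nat.mul_le_mul_right _ h𝒯card


end perphi



lemma comb {m c r : ℕ} (hm : 0 < m) (hc : 2 ≤ c) (hcr : c ≤ r) (hrm : r < m)
    (hn2 : 2 ≤ m - r)
    (A : Matrix (Fin (2 * c)) (Fin m) ℂ)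
    (hker : ∀ v : Fin m → ℂ, A.mulVec v = 0 → {j | v j ≠ 0}.ncard ≤ 2 * c → v = 0)
    (y : Fin m → ℂ) (hy : {j | y j ≠ 0}.ncard = r) :
    (Finset.univ.filter (fun σ : Equiv.Perm (Fin m) =>
        ∃ y' : Fin m → ℂ, {j | y' j ≠ 0}.ncard ≤ 1 ∧ A.mulVec ((fun j => y (σ j)) - y') = 0)).card
      * (m - r + (c - 1)).factorial
      ≤ (2 * (m - r + (c - 1))) * ((c - 1).factorial * (m - r).factorial) * m.factorial := by
  classical
  set Sf : Finset (Fin m) := Finset.univ.filter (fun j => y j ≠ 0) with hSfdef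
  have hSfset : {j | y j ≠ 0} = (Sf : Set (Fin m)) := by ext j; simp [hSfdef]
  have hSf : Sf.card = r := by rw [hSfset, Set.ncard_coe_finset] at hy; exact hy
  obtain ⟨S1, hS1sub, hS1card⟩ := Finset.exists_subset_card_eq
    (show c - 1 ≤ Sf.card by omega)
  set S0 := Sf \ S1 with hS0def
  have hdisj : Disjoint S0 S1 := Finset.sdiff_disjoint
  have hS0card : S0.card = r - (c - 1) := by
    rw [hS0def, Finset.card_sdiff_of_subset hS1sub, hSf, hS1card]
  have hS1y : ∀ s ∈ S1, y s ≠ 0 := fun s hs => (Finset.mem_filter.mp (hS1sub hs)).2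
  have hSuny : ∀ j, y j ≠ 0 → j ∈ S0 ∪ S1 := by
    intro j hj
    rw [hS0def, Finset.sdiff_union_of_subset hS1sub]
    exact Finset.mem_filter.mpr ⟨Finset.mem_univ _, hj⟩
  set badF := Finset.univ.filter (fun σ : Equiv.Perm (Fin m) =>
      ∃ y' : Fin m → ℂ, {j | y' j ≠ 0}.ncard ≤ 1 ∧ A.mulVec ((fun j => y (σ j)) - y') = 0)
    with hbadF
  set D := (2 * (m - r + (c - 1))) * ((c - 1).factorial * (m - r).factorial) with hD
  have hfib : badF.card = ∑ φ ∈ Finset.univ.image (Phi S0),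
      (badF.filter (fun σ => Phi S0 σ = φ)).card :=
    Finset.card_eq_sum_card_fiberwise (fun σ _ => Finset.mem_image_of_mem _ (Finset.mem_univ σ))
  have hperφ : ∀ φ ∈ Finset.univ.image (Phi S0),
      (badF.filter (fun σ => Phi S0 σ = φ)).card ≤ D := by
    intro φ hφ
    obtain ⟨σ0, _, rfl⟩ := Finset.mem_image.mp hφ
    have heq : badF.filter (fun σ => Phi S0 σ = Phi S0 σ0)
        = Finset.univ.filter (fun σ : Equiv.Perm (Fin m) =>
            (∃ y' : Fin m → ℂ, {j | y' j ≠ 0}.ncard ≤ 1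
              ∧ A.mulVec ((fun j => y (σ j)) - y') = 0)
            ∧ Phi S0 σ = Phi S0 σ0) := by
      rw [hbadF, Finset.filter_filter]
    rw [heq, hD]
    exact per_phi A y hm hc hcr hrm hn2 hker S0 S1 hdisj hS1y hS1card hS0card hSuny σ0
  have himg : (Finset.univ.image (Phi S0)).card * (m - r + (c - 1)).factorial ≤ m.factorial := by
    have htot : (Finset.univ : Finset (Equiv.Perm (Fin m))).card
        = ∑ φ ∈ Finset.univ.image (Phi S0),
            ((Finset.univ : Finset (Equiv.Perm (Fin m))).filter (fun σ => Phi S0 σ = φ)).card :=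
      Finset.card_eq_sum_card_fiberwise (fun σ _ => Finset.mem_image_of_mem _ (Finset.mem_univ σ))
    have hlb : ∀ φ ∈ Finset.univ.image (Phi S0), (m - r + (c - 1)).factorial
        ≤ ((Finset.univ : Finset (Equiv.Perm (Fin m))).filter (fun σ => Phi S0 σ = φ)).card := by
      intro φ hφ
      obtain ⟨σ0, _, rfl⟩ := Finset.mem_image.mp hφ
      have := fiber_lb S0 σ0
      have harith : m - S0.card = m - r + (c - 1) := by
        rw [hS0card]; omega
      rwa [harith] at this
    calc (Finset.univ.image (Phi S0)).card * (m - r + (c - 1)).factorial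
        = ∑ _φ ∈ Finset.univ.image (Phi S0), (m - r + (c - 1)).factorial := by
          rw [Finset.sum_const, smul_eq_mul]
      _ ≤ ∑ φ ∈ Finset.univ.image (Phi S0),
            ((Finset.univ : Finset (Equiv.Perm (Fin m))).filter (fun σ => Phi S0 σ = φ)).card :=
          Finset.sum_le_sum hlb
      _ = (Finset.univ : Finset (Equiv.Perm (Fin m))).card := htot.symm
      _ = m.factorial := by rw [Finset.card_univ, Fintype.card_perm, Fintype.card_fin]
  have hbadcard : badF.card ≤ (Finset.univ.image (Phi S0)).card * D := by
    rw [hfib]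
    calc ∑ φ ∈ Finset.univ.image (Phi S0), (badF.filter (fun σ => Phi S0 σ = φ)).card
        ≤ ∑ _φ ∈ Finset.univ.image (Phi S0), D := Finset.sum_le_sum hperφ
      _ = (Finset.univ.image (Phi S0)).card * D := by rw [Finset.sum_const, smul_eq_mul]
  calc badF.card * (m - r + (c - 1)).factorial
      ≤ (Finset.univ.image (Phi S0)).card * D * (m - r + (c - 1)).factorial :=
        Nat.mul_le_mul_right _ hbadcard
    _ = D * ((Finset.univ.image (Phi S0)).card * (m - r + (c - 1)).factorial) := by ring
    _ ≤ D * m.factorial := Nat.mul_le_mul_left _ himg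
    _ = (2 * (m - r + (c - 1))) * ((c - 1).factorial * (m - r).factorial) * m.factorial := by
        rw [hD]

lemma fact_le_pow' (k : ℕ) (hk : 1 ≤ k) : k.factorial ≤ (k + 1) ^ (k - 1) := by
  induction k with
  | zero => simp
  | succ k ih =>
    rcases Nat.eq_zero_or_pos k with rfl | hk'
    · simp
    · have h1 := ih hk'
      calc (k + 1).factorial = (k + 1) * k.factorial := Nat.factorial_succ k
        _ ≤ (k + 1) * (k + 1) ^ (k - 1) := Nat.mul_le_mul_left _ h1
        _ = (k + 1) ^ (k - 1 + 1) := (pow_succ' _ _).symm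
        _ = (k + 1) ^ k := by congr 1; omega
        _ ≤ (k + 2) ^ k := Nat.pow_le_pow_left (by omega) _

lemma arith_lemma (n k : ℕ) (hn : 2 ≤ n) (hk : 1 ≤ k) :
    2 * (n + k) * (k.factorial * n.factorial) * n ^ (k - 1)
      ≤ (k + 1) ^ k * (n + k).factorial := by
  have h1 : n.factorial * n ^ (k - 1) ≤ (n + k - 1).factorial := by
    calc n.factorial * n ^ (k - 1) ≤ n.factorial * (n + 1) ^ (k - 1) :=
          Nat.mul_le_mul_left _ (Nat.pow_le_pow_left (by omega) _)
      _ ≤ (n + (k - 1)).factorial := Nat.factorial_mul_pow_le_factorial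
      _ = (n + k - 1).factorial := by congr 1; omega
  have h2 : 2 * k.factorial ≤ (k + 1) ^ k := by
    calc 2 * k.factorial ≤ (k + 1) * (k + 1) ^ (k - 1) :=
          Nat.mul_le_mul (by omega) (fact_le_pow' k hk)
      _ = (k + 1) ^ (k - 1 + 1) := (pow_succ' _ _).symm
      _ = (k + 1) ^ k := by congr 1; omega
  have h3 : (n + k).factorial = (n + k) * (n + k - 1).factorial := by
    have he : n + k = (n + k - 1) + 1 := by omega
    rw [he, Nat.factorial_succ]
    congr 2
  calc 2 * (n + k) * (k.factorial * n.factorial) * n ^ (k - 1)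
      = (2 * k.factorial) * ((n + k) * (n.factorial * n ^ (k - 1))) := by ring
    _ ≤ ((k + 1) ^ k) * ((n + k) * (n + k - 1).factorial) :=
        Nat.mul_le_mul h2 (Nat.mul_le_mul_left _ h1)
    _ = (k + 1) ^ k * (n + k).factorial := by rw [h3]


/-- If `y ∈ ℂ^m` is drawn from a permutation-invariant distribution with
exactly `r ≥ c` nonzero values, and `A` is the 2c × m matrix of the first 2c rows of
the inverse Fourier matrix, then the probability that some 1-sparse `y'` satisfies
`A(y − y') = 0` is at most `c·(c/(m−r))^{c−2}`. -/
theorem stmt2 (m c r : ℕ) (hm : 0 < m) (hc : 2 ≤ c) (hcr : c ≤ r) (hrm : r < m)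
    (μ : Measure (Fin m → ℂ)) [IsProbabilityMeasure μ]
    (hperm : ∀ σ : Equiv.Perm (Fin m), Measure.map (fun y => y ∘ σ) μ = μ)
    (hsupp : ∀ᵐ y ∂μ, {j | y j ≠ 0}.ncard = r)
    (A : Matrix (Fin (2 * c)) (Fin m) ℂ)
    (hA : ∀ (τ : Fin (2 * c)) (j : Fin m),
      A τ j = Complex.exp (-(2 * Real.pi * Complex.I) / m) ^ (-(((τ : ℕ) * (j : ℕ) : ℕ) : ℤ))) :
    μ {y | ∃ y' : Fin m → ℂ, {j | y' j ≠ 0}.ncard ≤ 1 ∧ A.mulVec (y - y') = 0}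
      ≤ ENNReal.ofReal ((c : ℝ) * ((c : ℝ) / ((m : ℝ) - (r : ℝ))) ^ (c - 2)) := by
  classical
  have h2c0 : 0 < 2 * c := by omega
  have hmrR : (0 : ℝ) < (m : ℝ) - (r : ℝ) := by
    have : (r : ℝ) < (m : ℝ) := by exact_mod_cast hrm
    linarith
  set B : ℝ := (c : ℝ) * ((c : ℝ) / ((m : ℝ) - (r : ℝ))) ^ (c - 2) with hBdef
  have hB0 : 0 ≤ B := by
    apply mul_nonneg (by positivity)
    apply pow_nonneg
    positivity
  set Es : Set (Fin m → ℂ) :=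
    {x | ∃ y' : Fin m → ℂ, {j | y' j ≠ 0}.ncard ≤ 1 ∧ A.mulVec (x - y') = 0} with hEsdef
  show μ Es ≤ ENNReal.ofReal B
  have hAω := hA_omega m c hm A hA
  have hker := ker_lemma m c hm A hAω
  set τ0 : Fin (2 * c) := ⟨0, h2c0⟩ with hτ0
  have hA0 : ∀ j0 : Fin m, A τ0 j0 = 1 := by
    intro j0
    rw [hAω]
    simp [hτ0]
  have hmv : ∀ τ : Fin (2 * c), Measurable fun x : Fin m → ℂ => A.mulVec x τ := by
    intro τ
    have he : (fun x : Fin m → ℂ => A.mulVec x τ) = fun x => ∑ j, A τ j * x j := by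
      funext x
      simp [Matrix.mulVec, dotProduct]
    rw [he]
    exact Finset.measurable_sum _ (fun j _ => (measurable_pi_apply j).const_mul _)
  have hEschar : Es = ⋃ j0 : Fin m, ⋂ τ : Fin (2 * c),
      {x | A.mulVec x τ = A.mulVec x τ0 * A τ j0} := by
    ext x
    simp only [Set.mem_iUnion, Set.mem_iInter, Set.mem_setOf_eq, hEsdef]
    constructor
    · rintro ⟨y', hy'sp, hy'0⟩
      obtain ⟨j0, t, rfl⟩ := sparse_single m hm y' hy'sp
      rw [Matrix.mulVec_sub, sub_eq_zero] at hy'0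
      refine ⟨j0, fun τ => ?_⟩
      have h1 : A.mulVec x τ = A τ j0 * t := by
        rw [hy'0, Matrix.mulVec_single]; rfl
      have h2 : A.mulVec x τ0 = t := by
        rw [hy'0, Matrix.mulVec_single]
        show A τ0 j0 * t = t
        rw [hA0 j0]; ring
      rw [h1, h2]; ring
    · rintro ⟨j0, hj0⟩
      refine ⟨(Pi.single j0 (A.mulVec x τ0) : Fin m → ℂ), ?_, ?_⟩
      · have hsub : {j | (Pi.single j0 (A.mulVec x τ0) : Fin m → ℂ) j ≠ 0} ⊆ {j0} := by
          intro j hj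
          by_contra hne
          simp only [Set.mem_singleton_iff] at hne
          rw [Set.mem_setOf_eq, Pi.single_eq_of_ne hne] at hj
          exact hj rfl
        calc {j | (Pi.single j0 (A.mulVec x τ0) : Fin m → ℂ) j ≠ 0}.ncard
            ≤ ({j0} : Set (Fin m)).ncard := Set.ncard_le_ncard hsub (Set.toFinite _)
          _ = 1 := Set.ncard_singleton _
      · rw [Matrix.mulVec_sub]
        funext τ
        simp only [Pi.sub_apply, Pi.zero_apply, Matrix.mulVec_single]
        rw [hj0 τ]; exact sub_eq_zero.mpr (mul_comm _ _)
  have hEsm : MeasurableSet Es := by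
    rw [hEschar]
    exact MeasurableSet.iUnion fun j0 => MeasurableSet.iInter fun τ =>
      measurableSet_eq_fun (hmv τ) ((hmv τ0).mul_const _)
  by_cases hn2 : 2 ≤ m - r
  case neg =>
    have hn1 : m - r = 1 := by omega
    have hcast : (m : ℝ) - (r : ℝ) = ((m - r : ℕ) : ℝ) := by
      rw [Nat.cast_sub hrm.le]
    have hB1 : (1 : ℝ) ≤ B := by
      rw [hBdef, hcast, hn1]
      have hc1 : (1 : ℝ) ≤ (c : ℝ) := by exact_mod_cast (by omega : 1 ≤ c)
      rw [Nat.cast_one, div_one]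
      calc (1 : ℝ) ≤ (c : ℝ) := hc1
        _ = (c : ℝ) * 1 := (mul_one _).symm
        _ ≤ (c : ℝ) * (c : ℝ) ^ (c - 2) := by
            apply mul_le_mul_of_nonneg_left (one_le_pow₀ hc1) (by positivity)
    calc μ Es ≤ 1 := prob_le_one
      _ = ENNReal.ofReal 1 := ENNReal.ofReal_one.symm
      _ ≤ ENNReal.ofReal B := ENNReal.ofReal_le_ofReal hB1
  case pos =>
    have hσmeas : ∀ σ : Equiv.Perm (Fin m), Measurable fun x : Fin m → ℂ => x ∘ σ :=
      fun σ => measurable_pi_lambda _ fun j => measurable_pi_apply _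
    have hpre : ∀ σ : Equiv.Perm (Fin m), μ ((fun x : Fin m → ℂ => x ∘ σ) ⁻¹' Es) = μ Es := by
      intro σ
      conv_rhs => rw [← hperm σ]
      rw [Measure.map_apply (hσmeas σ) hEsm]
    set N : (Fin m → ℂ) → ℕ := fun x => (Finset.univ.filter (fun σ : Equiv.Perm (Fin m) =>
        ∃ y' : Fin m → ℂ, {j | y' j ≠ 0}.ncard ≤ 1
          ∧ A.mulVec ((fun j => x (σ j)) - y') = 0)).card with hN
    have hptwise : ∀ x : Fin m → ℂ,
        ∑ σ : Equiv.Perm (Fin m),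
          Set.indicator ((fun x : Fin m → ℂ => x ∘ σ) ⁻¹' Es) (fun _ => (1 : ENNReal)) x
        = (N x : ENNReal) := by
      intro x
      have hNx : N x = ∑ σ : Equiv.Perm (Fin m),
          if (∃ y' : Fin m → ℂ, {j | y' j ≠ 0}.ncard ≤ 1
            ∧ A.mulVec ((fun j => x (σ j)) - y') = 0) then 1 else 0 := by
        rw [hN]
        exact Finset.card_filter _ _
      rw [hNx, Nat.cast_sum]
      apply Finset.sum_congr rfl
      intro σ _
      have hiff : x ∈ (fun x : Fin m → ℂ => x ∘ σ) ⁻¹' Es ↔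
          (∃ y' : Fin m → ℂ, {j | y' j ≠ 0}.ncard ≤ 1
            ∧ A.mulVec ((fun j => x (σ j)) - y') = 0) := Iff.rfl
      rw [Set.indicator_apply]
      by_cases h : (∃ y' : Fin m → ℂ, {j | y' j ≠ 0}.ncard ≤ 1
            ∧ A.mulVec ((fun j => x (σ j)) - y') = 0)
      · rw [if_pos (hiff.mpr h), if_pos h, Nat.cast_one]
      · rw [if_neg (fun hx => h (hiff.mp hx)), if_neg h, Nat.cast_zero]
    have hkey : (m.factorial : ENNReal) * μ Es = ∫⁻ x, (N x : ENNReal) ∂μ := by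
      calc (m.factorial : ENNReal) * μ Es
          = ∑ σ : Equiv.Perm (Fin m), μ ((fun x : Fin m → ℂ => x ∘ σ) ⁻¹' Es) := by
            rw [Finset.sum_congr rfl fun σ _ => hpre σ, Finset.sum_const, Finset.card_univ,
              Fintype.card_perm, Fintype.card_fin, nsmul_eq_mul]
        _ = ∑ σ : Equiv.Perm (Fin m), ∫⁻ x,
              Set.indicator ((fun x : Fin m → ℂ => x ∘ σ) ⁻¹' Es) (fun _ => (1 : ENNReal)) x ∂μ := by
            refine Finset.sum_congr rfl fun σ _ => ?_
            rw [← MeasureTheory.lintegral_indicator_one ((hσmeas σ) hEsm)]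
            rfl
        _ = ∫⁻ x, ∑ σ : Equiv.Perm (Fin m),
              Set.indicator ((fun x : Fin m → ℂ => x ∘ σ) ⁻¹' Es) (fun _ => (1 : ENNReal)) x ∂μ :=
            (MeasureTheory.lintegral_finset_sum _ fun σ _ =>
              measurable_const.indicator ((hσmeas σ) hEsm)).symm
        _ = ∫⁻ x, (N x : ENNReal) ∂μ := by
            congr 1
            funext x
            exact hptwise x
    have hF0 : (((m - r + (c - 1)).factorial : ℕ) : ENNReal) ≠ 0 := by
      exact_mod_cast (Nat.factorial_ne_zero _)
    have hFt : (((m - r + (c - 1)).factorial : ℕ) : ENNReal) ≠ ⊤ := ENNReal.natCast_ne_top _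
    have hreal : ((2 * (m - r + (c - 1)) * ((c - 1).factorial * (m - r).factorial) : ℕ) : ℝ)
        ≤ B * (((m - r + (c - 1)).factorial : ℕ) : ℝ) := by
      have hx0 : (0 : ℝ) < ((m - r : ℕ) : ℝ) := by
        exact_mod_cast (by omega : 0 < m - r)
      have hcast : (m : ℝ) - (r : ℝ) = ((m - r : ℕ) : ℝ) := by
        rw [Nat.cast_sub hrm.le]
      have hccc : (c : ℝ) * (c : ℝ) ^ (c - 2) = (c : ℝ) ^ (c - 1) := by
        rw [← pow_succ']
        congr 1
        omega
      have hBeq : B = ((c : ℝ) ^ (c - 1)) / ((m - r : ℕ) : ℝ) ^ (c - 2) := by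
        rw [hBdef, hcast, div_pow, ← mul_div_assoc, hccc]
      rw [hBeq, div_mul_eq_mul_div, le_div_iff₀ (by positivity)]
      have harith := arith_lemma (m - r) (c - 1) hn2 (by omega)
      rw [show c - 1 - 1 = c - 2 from by omega, show c - 1 + 1 = c from by omega] at harith
      exact_mod_cast harith
    have hDle : ((2 * (m - r + (c - 1)) * ((c - 1).factorial * (m - r).factorial)
          * m.factorial : ℕ) : ENNReal)
        ≤ (ENNReal.ofReal B * (m.factorial : ENNReal)) * ((m - r + (c - 1)).factorial : ENNReal) := by
      calc ((2 * (m - r + (c - 1)) * ((c - 1).factorial * (m - r).factorial)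
            * m.factorial : ℕ) : ENNReal)
          = ENNReal.ofReal ((2 * (m - r + (c - 1)) * ((c - 1).factorial * (m - r).factorial)
              : ℕ) : ℝ) * (m.factorial : ENNReal) := by
            rw [Nat.cast_mul, ENNReal.ofReal_natCast]
        _ ≤ ENNReal.ofReal (B * (((m - r + (c - 1)).factorial : ℕ) : ℝ)) * (m.factorial : ENNReal) :=
            mul_le_mul_left (ENNReal.ofReal_le_ofReal hreal) _
        _ = (ENNReal.ofReal B * ((m - r + (c - 1)).factorial : ENNReal)) * (m.factorial : ENNReal) := by
            rw [ENNReal.ofReal_mul hB0, ENNReal.ofReal_natCast]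
        _ = (ENNReal.ofReal B * (m.factorial : ENNReal)) * ((m - r + (c - 1)).factorial : ENNReal) := by
            ring
    have hae : ∀ᵐ x ∂μ, (N x : ENNReal) ≤ ENNReal.ofReal B * (m.factorial : ENNReal) := by
      filter_upwards [hsupp] with x hx
      have hcomb := comb hm hc hcr hrm hn2 A hker x hx
      have hNx : N x = (Finset.univ.filter (fun σ : Equiv.Perm (Fin m) =>
          ∃ y' : Fin m → ℂ, {j | y' j ≠ 0}.ncard ≤ 1
            ∧ A.mulVec ((fun j => x (σ j)) - y') = 0)).card := rfl
      have h1 : (N x : ENNReal) * ((m - r + (c - 1)).factorial : ENNReal)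
          ≤ ((2 * (m - r + (c - 1)) * ((c - 1).factorial * (m - r).factorial)
              * m.factorial : ℕ) : ENNReal) := by
        rw [hNx]
        exact_mod_cast hcomb
      have h2 := le_trans h1 hDle
      exact (ENNReal.mul_le_mul_iff_left hF0 hFt).mp h2
    have hint : ∫⁻ x, (N x : ENNReal) ∂μ ≤ ENNReal.ofReal B * (m.factorial : ENNReal) := by
      refine le_trans (MeasureTheory.lintegral_mono_ae hae) ?_
      rw [MeasureTheory.lintegral_const, measure_univ, mul_one]
    have hm0 : ((m.factorial : ℕ) : ENNReal) ≠ 0 := by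
      exact_mod_cast (Nat.factorial_ne_zero _)
    have hmt : ((m.factorial : ℕ) : ENNReal) ≠ ⊤ := ENNReal.natCast_ne_top _
    have hfinal : (m.factorial : ENNReal) * μ Es ≤ (m.factorial : ENNReal) * ENNReal.ofReal B := by
      rw [hkey]
      exact hint.trans_eq (mul_comm _ _)
    exact (ENNReal.mul_le_mul_iff_right hm0 hmt).mp hfinal
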